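/- Let G be a d-regular graph on n vertices (n even) with edge set E, let ζ ∈ (0, 1/100], and let k ≥ 1 satisfy k·exp(−49·n/(3200·k)) ≤ 0.01. Let S = {v_1, …, v_{n/2}} be a set of n/2 vertices, Ẽ ⊆ E, and π : Ẽ → [n/2] a map with v_{π(e)} ∈ e for all e ∈ Ẽ; for j ∈ [n/2] let d_j := d − |π^{-1}(j)|, and suppose Σ_{j=1}^{n/2} d_j = ζ·|E|. Let ρ : [n] → [k] be a uniformly random coloring, and for i ∈ [k] let C̃_i := {e ∈ Ẽ : ρ(v_{π(e)}) = i}. Then with probability at least 0.99, |C̃_i| ≥ n·d/(6k) for every i ∈ [k]. -/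

import Mathlib

set_option maxHeartbeats 1000000

open Finset

lemma factor_bound (k d : ℕ) (hk : 1 ≤ k) (hd : 0 < d) (w : ℝ) (hw0 : 0 ≤ w) (hwd : w ≤ d) :
    ((k : ℝ) - 1) + Real.exp (-(2/(3*(d:ℝ)) * w)) ≤ (k:ℝ) * Real.exp (-(2/(5*(d:ℝ)*(k:ℝ)) * w)) := by
  have hd' : (0:ℝ) < d := by exact_mod_cast hd
  have hk' : (1:ℝ) ≤ k := by exact_mod_cast hk
  set s : ℝ := 2/(3*(d:ℝ)) * w with hs
  have hs0 : 0 ≤ s := by positivity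
  have hs1 : s ≤ 2/3 := by
    rw [hs, div_mul_eq_mul_div, div_le_div_iff₀ (by positivity) (by norm_num : (0:ℝ) < 3)]
    nlinarith
  have h1 : Real.exp (-s) ≤ 1 - (3/5) * s := by
    have he : s + 1 ≤ Real.exp s := Real.add_one_le_exp s
    have hA : Real.exp (-s) * Real.exp s = 1 := by rw [← Real.exp_add]; simp
    have hB : Real.exp (-s) * (s+1) ≤ 1 := by
      calc Real.exp (-s) * (s+1) ≤ Real.exp (-s) * Real.exp s :=
            mul_le_mul_of_nonneg_left he (Real.exp_pos _).le
        _ = 1 := hA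
    nlinarith [Real.exp_pos (-s), hB, hs0, hs1, mul_nonneg hs0 hs0]
  have ht : 2/(5*(d:ℝ)*(k:ℝ)) * w = (3/5) * s / k := by
    rw [hs]; field_simp
  have h3 : 1 - (3/5)*s/(k:ℝ) ≤ Real.exp (-((3/5)*s/k)) := Real.one_sub_le_exp_neg _
  have hkpos : (0:ℝ) < k := by linarith
  calc ((k:ℝ) - 1) + Real.exp (-s) ≤ (k:ℝ) - 1 + (1 - 3/5*s) := by linarith
    _ = (k:ℝ) * (1 - (3/5)*s/k) := by field_simp; ring
    _ ≤ (k:ℝ) * Real.exp (-((3/5)*s/k)) := by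
        exact mul_le_mul_of_nonneg_left h3 (by linarith)
    _ = (k:ℝ) * Real.exp (-(2/(5*(d:ℝ)*(k:ℝ)) * w)) := by rw [ht]

open Classical in
lemma chernoff_count (n m k d : ℕ) (hk : 1 ≤ k) (hd : 0 < d)
    (v : Fin m → Fin n) (hv : Function.Injective v)
    (w : Fin m → ℕ) (hw : ∀ j, w j ≤ d) (i : Fin k) (a : ℝ) (ha : 0 ≤ a) :
    ((univ.filter (fun ρ : Fin n → Fin k =>
        (∑ j, if ρ (v j) = i then ((w j : ℝ)) else 0) < a)).card : ℝ)
      ≤ (k:ℝ)^n * Real.exp (2/(3*(d:ℝ)) * a - 2/(5*(d:ℝ)*(k:ℝ)) * ∑ j, (w j:ℝ)) := by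
  set lam : ℝ := 2/(3*(d:ℝ)) with hlam
  have hd' : (0:ℝ) < d := by exact_mod_cast hd
  have hlam0 : 0 < lam := by positivity
  set W : Fin n → ℝ := fun x => ∑ j ∈ univ.filter (fun j => v j = x), (w j : ℝ) with hW
  have hW0 : ∀ x, 0 ≤ W x := fun x => Finset.sum_nonneg (fun j _ => by positivity)
  have hWd : ∀ x, W x ≤ d := by
    intro x
    by_cases hx : ∃ j, v j = x
    · obtain ⟨j, rfl⟩ := hx
      have hfib : univ.filter (fun j' => v j' = v j) = {j} := by
        ext j'; simp [hv.eq_iff]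
      have : W (v j) = (w j : ℝ) := by simp only [hW, hfib, Finset.sum_singleton]
      rw [this]; exact_mod_cast hw j
    · have hfib : univ.filter (fun j' => v j' = x) = ∅ := by
        ext j'; simp; intro h; exact hx ⟨j', h⟩
      have : W x = 0 := by simp only [hW, hfib, Finset.sum_empty]
      rw [this]; positivity
  have hWsum : ∑ x, W x = ∑ j, (w j : ℝ) :=
    Finset.sum_fiberwise univ v (fun j => (w j : ℝ))
  -- rewrite the statistic fiberwise
  have hstat : ∀ ρ : Fin n → Fin k,
      (∑ j, if ρ (v j) = i then ((w j : ℝ)) else 0)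
        = ∑ x, (if ρ x = i then W x else 0) := by
    intro ρ
    rw [← Finset.sum_fiberwise univ v (fun j => if ρ (v j) = i then ((w j : ℝ)) else 0)]
    refine Finset.sum_congr rfl fun x _ => ?_
    by_cases hρ : ρ x = i
    · rw [if_pos hρ, hW]
      refine Finset.sum_congr rfl fun j hj => ?_
      rw [Finset.mem_filter] at hj
      rw [hj.2, if_pos hρ]
    · rw [if_neg hρ]
      refine Finset.sum_eq_zero fun j hj => ?_
      rw [Finset.mem_filter] at hj
      rw [hj.2, if_neg hρ]
  -- step 1: card ≤ sum of exp over all colorings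
  have step1 : ((univ.filter (fun ρ : Fin n → Fin k =>
        (∑ j, if ρ (v j) = i then ((w j : ℝ)) else 0) < a)).card : ℝ)
      ≤ ∑ ρ : Fin n → Fin k,
          Real.exp (lam * (a - ∑ x, (if ρ x = i then W x else 0))) := by
    rw [Finset.card_filter]
    push_cast
    refine Finset.sum_le_sum fun ρ _ => ?_
    by_cases hρ : (∑ j, if ρ (v j) = i then ((w j : ℝ)) else 0) < a
    · rw [if_pos hρ]
      refine Real.one_le_exp ?_
      have := hstat ρ
      have hpos : 0 ≤ a - ∑ x, (if ρ x = i then W x else 0) := by linarith [this ▸ hρ]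
      positivity
    · rw [if_neg hρ]; exact (Real.exp_pos _).le
  -- step 2: factorize
  have step2 : ∑ ρ : Fin n → Fin k,
          Real.exp (lam * (a - ∑ x, (if ρ x = i then W x else 0)))
      = Real.exp (lam * a) *
          ∏ x : Fin n, ∑ c : Fin k, Real.exp (-(lam * (if c = i then W x else 0))) := by
    rw [Finset.prod_univ_sum (fun _ => (univ : Finset (Fin k)))
        (fun x c => Real.exp (-(lam * (if c = i then W x else 0))))]
    rw [Fintype.piFinset_univ, Finset.mul_sum]
    refine Finset.sum_congr rfl fun ρ _ => ?_
    rw [← Real.exp_sum, ← Real.exp_add]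
    congr 1
    rw [Finset.sum_neg_distrib, ← Finset.mul_sum, mul_sub]
    ring
  -- step 4: evaluate the inner sum
  have step4 : ∀ x : Fin n, (∑ c : Fin k, Real.exp (-(lam * (if c = i then W x else 0))))
      = ((k:ℝ) - 1) + Real.exp (-(lam * W x)) := by
    intro x
    rw [← Finset.add_sum_erase _ _ (Finset.mem_univ i), if_pos rfl]
    have : ∀ c ∈ Finset.univ.erase i,
        Real.exp (-(lam * (if c = i then W x else 0))) = 1 := by
      intro c hc
      rw [if_neg (Finset.ne_of_mem_erase hc), mul_zero, neg_zero, Real.exp_zero]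
    rw [Finset.sum_congr rfl this, Finset.sum_const, Finset.card_erase_of_mem (Finset.mem_univ i),
      Finset.card_univ, Fintype.card_fin, nsmul_eq_mul, mul_one]
    have hk1 : ((k - 1 : ℕ) : ℝ) = (k:ℝ) - 1 := by
      have := hk; push_cast [Nat.cast_sub this]; ring
    rw [hk1]; ring
  -- step 5: bound each factor and take the product
  have step5 : (∏ x : Fin n, (((k:ℝ) - 1) + Real.exp (-(lam * W x))))
      ≤ (k:ℝ)^n * Real.exp (-(2/(5*(d:ℝ)*(k:ℝ)) * ∑ j, (w j:ℝ))) := by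
    have hfac : ∀ x : Fin n, ((k:ℝ) - 1) + Real.exp (-(lam * W x))
        ≤ (k:ℝ) * Real.exp (-(2/(5*(d:ℝ)*(k:ℝ)) * W x)) := by
      intro x
      have := factor_bound k d hk hd (W x) (hW0 x) (hWd x)
      rw [hlam]; convert this using 3 <;> ring
    calc (∏ x : Fin n, (((k:ℝ) - 1) + Real.exp (-(lam * W x))))
        ≤ ∏ x : Fin n, (k:ℝ) * Real.exp (-(2/(5*(d:ℝ)*(k:ℝ)) * W x)) := by
          refine Finset.prod_le_prod (fun x _ => ?_) (fun x _ => hfac x)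
          have hk' : (1:ℝ) ≤ k := by exact_mod_cast hk
          have := (Real.exp_pos (-(lam * W x))).le
          linarith
      _ = (k:ℝ)^n * Real.exp (-(2/(5*(d:ℝ)*(k:ℝ)) * ∑ j, (w j:ℝ))) := by
          rw [Finset.prod_mul_distrib, Finset.prod_const, Finset.card_univ, Fintype.card_fin,
            ← Real.exp_sum, ← hWsum]
          congr 2
          rw [Finset.sum_neg_distrib, ← Finset.mul_sum]
  -- combine
  have hexp : Real.exp (lam * a) * ((k:ℝ)^n * Real.exp (-(2/(5*(d:ℝ)*(k:ℝ)) * ∑ j, (w j:ℝ))))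
      = (k:ℝ)^n * Real.exp (2/(3*(d:ℝ)) * a - 2/(5*(d:ℝ)*(k:ℝ)) * ∑ j, (w j:ℝ)) := by
    rw [← hlam, mul_comm (Real.exp (lam * a)), mul_assoc, ← Real.exp_add]
    congr 2
    ring
  calc ((univ.filter (fun ρ : Fin n → Fin k =>
        (∑ j, if ρ (v j) = i then ((w j : ℝ)) else 0) < a)).card : ℝ)
      ≤ ∑ ρ : Fin n → Fin k,
          Real.exp (lam * (a - ∑ x, (if ρ x = i then W x else 0))) := step1
    _ = Real.exp (lam * a) *
          ∏ x : Fin n, ∑ c : Fin k, Real.exp (-(lam * (if c = i then W x else 0))) := step2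
    _ = Real.exp (lam * a) * ∏ x : Fin n, (((k:ℝ) - 1) + Real.exp (-(lam * W x))) := by
          rw [Finset.prod_congr rfl (fun x _ => step4 x)]
    _ ≤ Real.exp (lam * a) * ((k:ℝ)^n * Real.exp (-(2/(5*(d:ℝ)*(k:ℝ)) * ∑ j, (w j:ℝ)))) := by
          refine mul_le_mul_of_nonneg_left step5 (Real.exp_pos _).le
    _ = (k:ℝ)^n * Real.exp (2/(3*(d:ℝ)) * a - 2/(5*(d:ℝ)*(k:ℝ)) * ∑ j, (w j:ℝ)) := hexp

open Classical in
/-- given a cover `S = {v_1,…,v_{n/2}}` assigning edges via `π` with slack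
`Σ d_j = ζ|E|`, a uniformly random coloring makes every cluster
`C̃_i = {e ∈ Ẽ : ρ(v_{π(e)}) = i}` of size at least `nd/(6k)`, with probability at least
`0.99`. -/
theorem stmt16 (m n d k : ℕ) (hnm : n = 2 * m) (hk : 1 ≤ k)
    (G : SimpleGraph (Fin n)) [DecidableRel G.Adj]
    (hreg : G.IsRegularOfDegree d)
    (ζ : ℝ) (hζ0 : 0 < ζ) (hζ1 : ζ ≤ 1 / 100)
    (hktail : (k : ℝ) * Real.exp (-(49 * (n : ℝ)) / (3200 * (k : ℝ))) ≤ 0.01)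
    (v : Fin m → Fin n) (hv : Function.Injective v)
    (Et : Finset (Sym2 (Fin n))) (hEtE : Et ⊆ G.edgeFinset)
    (π : Sym2 (Fin n) → Fin m) (hπ : ∀ e ∈ Et, v (π e) ∈ e)
    (hslack : ∑ j : Fin m, ((d : ℝ) - ((Et.filter (fun e => π e = j)).card : ℝ)) =
      ζ * (G.edgeFinset.card : ℝ)) :
    0.99 * ((k : ℝ) ^ n) ≤
      ((Finset.univ.filter (fun ρ : Fin n → Fin k =>
          ∀ i : Fin k,
            (n : ℝ) * (d : ℝ) / (6 * (k : ℝ)) ≤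
              ((Et.filter (fun e => ρ (v (π e)) = i)).card : ℝ))).card : ℝ) := by
  classical
  have hk' : (0:ℝ) < k := by exact_mod_cast hk
  have hkR : (1:ℝ) ≤ k := by exact_mod_cast hk
  have hpow1 : (1:ℝ) ≤ (k:ℝ)^n := one_le_pow₀ hkR
  have hpow0 : (0:ℝ) ≤ (k:ℝ)^n := by positivity
  by_cases hd : d = 0
  · subst hd
    have hfil : (Finset.univ.filter (fun ρ : Fin n → Fin k =>
          ∀ i : Fin k,
            (n : ℝ) * ((0:ℕ) : ℝ) / (6 * (k : ℝ)) ≤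
              ((Et.filter (fun e => ρ (v (π e)) = i)).card : ℝ))) = Finset.univ := by
      refine Finset.filter_true_of_mem fun ρ _ => fun i => ?_
      simp
    rw [hfil, Finset.card_univ, Fintype.card_fun, Fintype.card_fin, Fintype.card_fin]
    push_cast
    nlinarith
  have hd0 : 0 < d := Nat.pos_of_ne_zero hd
  have hd' : (0:ℝ) < d := by exact_mod_cast hd0
  set w : Fin m → ℕ := fun j => (Et.filter fun e => π e = j).card with hwdef
  -- each fiber has size at most d
  have hw_le : ∀ j, w j ≤ d := by
    intro j
    have hsub : Et.filter (fun e => π e = j) ⊆ G.incidenceFinset (v j) := by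
      intro e he
      rw [Finset.mem_filter] at he
      rw [SimpleGraph.mem_incidenceFinset]
      refine ⟨SimpleGraph.mem_edgeFinset.1 (hEtE he.1), ?_⟩
      have := hπ e he.1
      rwa [he.2] at this
    calc w j ≤ (G.incidenceFinset (v j)).card := Finset.card_le_card hsub
      _ = G.degree (v j) := G.card_incidenceFinset_eq_degree (v j)
      _ = d := hreg (v j)
  have hwsum : ∑ j, w j = Et.card :=
    (Finset.card_eq_sum_card_fiberwise (fun e _ => Finset.mem_univ (π e))).symm
  have hEcard : 2 * G.edgeFinset.card = n * d := by
    rw [← SimpleGraph.sum_degrees_eq_twice_card_edges]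
    rw [Finset.sum_congr rfl (fun x _ => hreg x), Finset.sum_const, Finset.card_univ,
      Fintype.card_fin, smul_eq_mul]
  have hEm : G.edgeFinset.card = m * d := by
    refine Nat.eq_of_mul_eq_mul_left (show 0 < 2 by norm_num) ?_
    rw [hEcard, hnm]; ring
  have hEt : (Et.card : ℝ) = (1 - ζ) * ((m:ℝ)*(d:ℝ)) := by
    have h1 : (m:ℝ)*(d:ℝ) - (Et.card:ℝ) = ζ * ((m:ℝ)*(d:ℝ)) := by
      have h2 : ((G.edgeFinset.card : ℕ) : ℝ) = (m:ℝ)*(d:ℝ) := by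
        rw [hEm]; push_cast; ring
      rw [← h2, ← hslack, Finset.sum_sub_distrib, Finset.sum_const, Finset.card_univ,
        Fintype.card_fin, nsmul_eq_mul]
      congr 1
      rw [← Nat.cast_sum, hwsum]
    linarith
  -- the cluster size statistic
  have hcard : ∀ (ρ : Fin n → Fin k) (i : Fin k),
      ((Et.filter (fun e => ρ (v (π e)) = i)).card : ℝ)
        = ∑ j, if ρ (v j) = i then ((w j : ℕ):ℝ) else 0 := by
    intro ρ i
    have hnat : (Et.filter (fun e => ρ (v (π e)) = i)).card
        = ∑ j, if ρ (v j) = i then w j else 0 := by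
      rw [Finset.card_eq_sum_card_fiberwise
        (f := π) (t := Finset.univ) (fun e _ => Finset.mem_univ (π e))]
      refine Finset.sum_congr rfl fun j _ => ?_
      rw [Finset.filter_comm]
      by_cases hρ : ρ (v j) = i
      · rw [if_pos hρ]
        congr 1
        refine Finset.filter_true_of_mem fun e he => ?_
        rw [Finset.mem_filter] at he
        rw [he.2, hρ]
      · rw [if_neg hρ, Finset.card_eq_zero]
        refine Finset.filter_false_of_mem fun e he => ?_
        rw [Finset.mem_filter] at he
        rw [he.2]; exact hρ
    rw [hnat]
    push_cast
    rfl
  set a : ℝ := (n:ℝ)*(d:ℝ)/(6*(k:ℝ)) with ha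
  -- per-color Chernoff bound
  have key : ∀ i : Fin k,
      ((Finset.univ.filter (fun ρ : Fin n → Fin k =>
          ((Et.filter (fun e => ρ (v (π e)) = i)).card : ℝ) < a)).card : ℝ)
        ≤ (k:ℝ)^n * Real.exp (-(49*(n:ℝ)) / (3200*(k:ℝ))) := by
    intro i
    have heq : (Finset.univ.filter (fun ρ : Fin n → Fin k =>
          ((Et.filter (fun e => ρ (v (π e)) = i)).card : ℝ) < a))
        = (Finset.univ.filter (fun ρ : Fin n → Fin k =>
            (∑ j, if ρ (v j) = i then ((w j : ℕ):ℝ) else 0) < a)) := by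
      refine Finset.filter_congr fun ρ _ => ?_
      rw [hcard ρ i]
    rw [heq]
    refine le_trans (chernoff_count n m k d hk hd0 v hv w hw_le i a (by positivity)) ?_
    refine mul_le_mul_of_nonneg_left (Real.exp_le_exp.2 ?_) hpow0
    have hsw : ∑ j, ((w j : ℕ):ℝ) = (Et.card : ℝ) := by rw [← Nat.cast_sum, hwsum]
    rw [hsw, hEt, ha]
    have hnm' : (n:ℝ) = 2*(m:ℝ) := by exact_mod_cast hnm
    have hm0 : (0:ℝ) ≤ (m:ℝ) := by positivity
    have e1 : 2/(3*(d:ℝ)) * ((n:ℝ)*(d:ℝ)/(6*(k:ℝ))) = (n:ℝ)/(9*(k:ℝ)) := by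
      field_simp; ring
    have e2 : 2/(5*(d:ℝ)*(k:ℝ)) * ((1-ζ) * ((m:ℝ)*(d:ℝ))) = (1-ζ)*(n:ℝ)/(5*(k:ℝ)) := by
      rw [hnm']; field_simp
    rw [e1, e2]
    have hn0 : (0:ℝ) ≤ n := Nat.cast_nonneg n
    rw [div_sub_div _ _ (by positivity : (9:ℝ)*(k:ℝ) ≠ 0) (by positivity : (5:ℝ)*(k:ℝ) ≠ 0),
      div_le_div_iff₀ (by positivity) (by positivity)]
    nlinarith [mul_nonneg (mul_nonneg hn0 hk'.le) hk'.le, hζ1, hζ0, hk', hn0]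
  -- union bound
  set Bi : Fin k → Finset (Fin n → Fin k) := fun i =>
    Finset.univ.filter (fun ρ : Fin n → Fin k =>
      ((Et.filter (fun e => ρ (v (π e)) = i)).card : ℝ) < a) with hBi
  set P : (Fin n → Fin k) → Prop := fun ρ =>
    ∀ i : Fin k, a ≤ ((Et.filter (fun e => ρ (v (π e)) = i)).card : ℝ) with hP
  have hsubset : Finset.univ.filter (fun ρ => ¬ P ρ) ⊆ Finset.univ.biUnion Bi := by
    intro ρ hρ
    rw [Finset.mem_filter] at hρ
    have hρ2 := hρ.2
    simp only [hP, not_forall, not_le] at hρ2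
    obtain ⟨i, hi⟩ := hρ2
    exact Finset.mem_biUnion.2 ⟨i, Finset.mem_univ i,
      Finset.mem_filter.2 ⟨Finset.mem_univ ρ, hi⟩⟩
  have hBadcard : (((Finset.univ.filter (fun ρ => ¬ P ρ)).card : ℕ) : ℝ)
      ≤ (k:ℝ) * ((k:ℝ)^n * Real.exp (-(49*(n:ℝ)) / (3200*(k:ℝ)))) := by
    calc (((Finset.univ.filter (fun ρ => ¬ P ρ)).card : ℕ) : ℝ)
        ≤ (((Finset.univ.biUnion Bi).card : ℕ) : ℝ) := by
          exact_mod_cast Finset.card_le_card hsubset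
      _ ≤ ((∑ i : Fin k, (Bi i).card : ℕ) : ℝ) := by
          exact_mod_cast Finset.card_biUnion_le
      _ = ∑ i : Fin k, (((Bi i).card : ℕ) : ℝ) := by push_cast; rfl
      _ ≤ ∑ i : Fin k, (k:ℝ)^n * Real.exp (-(49*(n:ℝ)) / (3200*(k:ℝ))) :=
          Finset.sum_le_sum fun i _ => key i
      _ = (k:ℝ) * ((k:ℝ)^n * Real.exp (-(49*(n:ℝ)) / (3200*(k:ℝ)))) := by
          rw [Finset.sum_const, Finset.card_univ, Fintype.card_fin, nsmul_eq_mul]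
  have hsplit : (Finset.univ.filter P).card + (Finset.univ.filter (fun ρ => ¬ P ρ)).card
      = k ^ n := by
    rw [Finset.card_filter_add_card_filter_not, Finset.card_univ, Fintype.card_fun,
      Fintype.card_fin, Fintype.card_fin]
  have hbound : (k:ℝ) * ((k:ℝ)^n * Real.exp (-(49*(n:ℝ)) / (3200*(k:ℝ)))) ≤ 0.01 * (k:ℝ)^n := by
    have h1 : (k:ℝ) * Real.exp (-(49*(n:ℝ)) / (3200*(k:ℝ))) ≤ 0.01 := hktail
    nlinarith [Real.exp_pos (-(49*(n:ℝ)) / (3200*(k:ℝ)))]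
  have hsplit' : ((Finset.univ.filter P).card : ℝ)
      = (k:ℝ)^n - ((Finset.univ.filter (fun ρ => ¬ P ρ)).card : ℝ) := by
    have := hsplit
    have h2 : (((Finset.univ.filter P).card : ℕ) : ℝ)
        + (((Finset.univ.filter (fun ρ => ¬ P ρ)).card : ℕ) : ℝ) = (k:ℝ)^n := by
      rw [← Nat.cast_add, hsplit]; push_cast; ring
    linarith
  calc (0.99 : ℝ) * ((k : ℝ) ^ n)
      ≤ (k:ℝ)^n - 0.01 * (k:ℝ)^n := by nlinarith
    _ ≤ (k:ℝ)^n - ((Finset.univ.filter (fun ρ => ¬ P ρ)).card : ℝ) := by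
        have := le_trans hBadcard hbound
        linarith
    _ = ((Finset.univ.filter P).card : ℝ) := hsplit'.symm
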